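/- Assumptions and notation as in the Section 3 construction: (W,S) is an irreducible Coxeter system of finite rank with m_{st} < ∞ for all s,t ∈ S, whose Coxeter graph G = (S,E) contains at least two circuits; T = (S,E_0) is a spanning tree of G and {s_1,t_1}, {s_2,t_2} ∈ E ∖ E_0 are two distinct edges. Then the prescribed linear operators, one for each s ∈ S, on V := ⊕_{n∈ℤ, s∈S} ℂ α_{s,n} define a representation of W on V; that is, each operator is an involution, the operator assigned to s and the operator assigned to t satisfy ((st)-operator)^{m_{st}} = id for all s,t ∈ S, and hence s ↦ (its operator) extends to a group homomorphism from W to GL(V). -/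

import Mathlib

open Finsupp in
/-- The Section 3 operators: for each `s ∈ S`, a linear operator on
`V = ⊕_{n ∈ ℤ, t ∈ S} ℂ α_{t,n}`, where `α_{t,n}` is the standard basis vector
`Finsupp.single (t, n) 1`.  Here `M` is the Coxeter matrix (all of whose entries are assumed
finite), and `{s₁,t₁}`, `{s₂,t₂}` are the two chosen edges of the Coxeter graph outside of the
spanning tree.  The defining formulas are:
(i) `s·α_{s,n} = −α_{s,n}`;
(ii) `s₁·α_{t₁,n} = α_{t₁,n} + 2cos(π/m_{s₁t₁}) α_{s₁,n+1}`,
     `t₁·α_{s₁,n+1} = α_{s₁,n+1} + 2cos(π/m_{s₁t₁}) α_{t₁,n}`,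
     `s₂·α_{t₂,n} = α_{t₂,n} + 2^{n+1}cos(π/m_{s₂t₂}) α_{s₂,n+1}`,
     `t₂·α_{s₂,n+1} = α_{s₂,n+1} + 2^{−n+1}cos(π/m_{s₂t₂}) α_{t₂,n}`;
(iii) otherwise, for `s ≠ t`, `s·α_{t,n} = α_{t,n} + 2cos(π/m_{st}) α_{s,n}`
      (which is `α_{t,n}` when `m_{st} = 2` since `cos(π/2) = 0`). -/
noncomputable def sec3Act {B : Type*} [DecidableEq B] (M : CoxeterMatrix B)
    (s₁ t₁ s₂ t₂ : B) (s : B) : ((B × ℤ) →₀ ℂ) →ₗ[ℂ] ((B × ℤ) →₀ ℂ) :=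
  Finsupp.lift _ ℂ _ fun p =>
    if s = p.1 then -single p 1
    else if s = s₁ ∧ p.1 = t₁ then
      single p 1 + (2 * Real.cos (Real.pi / (M s₁ t₁ : ℝ)) : ℂ) • single (s₁, p.2 + 1) 1
    else if s = t₁ ∧ p.1 = s₁ then
      single p 1 + (2 * Real.cos (Real.pi / (M s₁ t₁ : ℝ)) : ℂ) • single (t₁, p.2 - 1) 1
    else if s = s₂ ∧ p.1 = t₂ then
      single p 1 + ((2 : ℂ) ^ (p.2 + 1) * (Real.cos (Real.pi / (M s₂ t₂ : ℝ)) : ℂ)) •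
        single (s₂, p.2 + 1) 1
    else if s = t₂ ∧ p.1 = s₂ then
      single p 1 + ((2 : ℂ) ^ (2 - p.2) * (Real.cos (Real.pi / (M s₂ t₂ : ℝ)) : ℂ)) •
        single (t₂, p.2 - 1) 1
    else
      single p 1 + (2 * Real.cos (Real.pi / (M s p.1 : ℝ)) : ℂ) • single (s, p.2) 1

/-- The Coxeter graph of a Coxeter matrix `M`. -/
def coxeterGraph {B : Type*} (M : CoxeterMatrix B) : SimpleGraph B where
  Adj s t := s ≠ t ∧ M s t ≠ 2
  symm := by
    constructor
    intro s t h
    exact ⟨h.1.symm, by rw [M.symmetric]; exact h.2⟩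
  loopless := by constructor; intro s h; exact h.1 rfl

/-- The subspace of vectors fixed by all the operators `σ s`. -/
def fixedSubmodule {B V : Type*} [AddCommGroup V] [Module ℂ V]
    (σ : B → V →ₗ[ℂ] V) : Submodule ℂ V where
  carrier := {v | ∀ s, σ s v = v}
  add_mem' := by
    intro a b ha hb s
    simp [map_add, ha s, hb s]
  zero_mem' := by intro s; simp
  smul_mem' := by
    intro c a ha s
    simp [map_smul, ha s]

open Complex

lemma exp_ne_one_aux (x : ℝ) (h0 : 0 < x) (h2 : x < 2 * Real.pi) :
    Complex.exp (x * I) ≠ 1 := by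
  intro h
  rw [Complex.exp_eq_one_iff] at h
  obtain ⟨k, hk⟩ := h
  have h1 : (x : ℂ) * I = ((k * (2 * Real.pi) : ℝ) : ℂ) * I := by
    rw [hk]; push_cast; ring
  have h2' : (x : ℝ) = k * (2 * Real.pi) := by
    exact_mod_cast mul_right_cancel₀ Complex.I_ne_zero h1
  have hπ := Real.pi_pos
  rcases le_or_gt k 0 with hk0 | hk0
  · have : (k:ℝ) ≤ 0 := by exact_mod_cast hk0
    nlinarith
  · have : (1:ℝ) ≤ k := by exact_mod_cast hk0
    nlinarith

lemma lam_facts (m : ℕ) (hm : 3 ≤ m) :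
    ∃ lam : ℂ, lam ≠ 0 ∧ lam ≠ 1 ∧ lam ^ 2 ≠ 1 ∧ lam ^ m = 1 ∧
      lam + lam⁻¹ = 2 * (Real.cos (2 * Real.pi / m) : ℂ) := by
  have hπ := Real.pi_pos
  have hm0 : (0:ℝ) < m := by positivity
  have hm3 : (3:ℝ) ≤ m := by exact_mod_cast hm
  set θ : ℝ := 2 * Real.pi / m with hθdef
  have hθ0 : 0 < θ := by positivity
  have hθle : θ ≤ 2 * Real.pi / 3 := by
    apply div_le_div_of_nonneg_left (by positivity) (by norm_num) hm3
  refine ⟨Complex.exp (θ * I), Complex.exp_ne_zero _, exp_ne_one_aux θ hθ0 (by nlinarith), ?_, ?_, ?_⟩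
  · rw [← Complex.exp_nat_mul]
    have : (2:ℕ) * ((θ:ℂ) * I) = ((2*θ : ℝ) : ℂ) * I := by push_cast; ring
    rw [this]
    exact exp_ne_one_aux _ (by nlinarith) (by nlinarith)
  · rw [← Complex.exp_nat_mul]
    have : (m : ℂ) * ((θ:ℂ) * I) = 2 * Real.pi * I := by
      have hm0' : (m:ℂ) ≠ 0 := by exact_mod_cast hm0.ne'
      rw [hθdef]; push_cast; field_simp
    rw [this, Complex.exp_two_pi_mul_I]
  · rw [← Complex.exp_neg, Complex.ofReal_cos, ← neg_mul, ← Complex.two_cos]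

lemma blockLemma {V : Type*} [AddCommGroup V] [Module ℂ V] (g : Module.End ℂ V)
    (m : ℕ) (hm0 : m ≠ 0) (hm1 : m ≠ 1) {x y : V} {a b : ℂ}
    (hab : a * b = 4 * (Real.cos (Real.pi / m) : ℂ) ^ 2)
    (h2 : m = 2 → a = 0 ∧ b = 0) (h3 : m ≠ 2 → b ≠ 0)
    (hgx : g x = -x - a • y) (hgy : g y = b • x + (a * b - 1) • y) :
    ((g ^ m) x = x ∧ (g ^ m) y = y) ∧
      ((∑ i ∈ Finset.range m, g ^ i) x = 0 ∧ (∑ i ∈ Finset.range m, g ^ i) y = 0) := by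
  by_cases hm2 : m = 2
  · obtain ⟨ha, hb⟩ := h2 hm2
    subst hm2 ha hb
    have hgx' : g x = -x := by rw [hgx]; module
    have hgy' : g y = -y := by rw [hgy]; module
    have hxx : (g ^ 2) x = x := by
      rw [pow_two, Module.End.mul_apply, hgx', map_neg, hgx', neg_neg]
    have hyy : (g ^ 2) y = y := by
      rw [pow_two, Module.End.mul_apply, hgy', map_neg, hgy', neg_neg]
    refine ⟨⟨hxx, hyy⟩, ?_, ?_⟩ <;>
      simp [Finset.sum_range_succ, hgx', hgy']
  · have hm3 : 3 ≤ m := by omega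
    have hb : b ≠ 0 := h3 hm2
    obtain ⟨lam, hl0, hl1, hl2ne, hlm, hlcos⟩ := lam_facts m hm3
    set μ := lam⁻¹ with hμdef
    have hμmul : lam * μ = 1 := mul_inv_cancel₀ hl0
    have hab' : a * b = 2 + lam + μ := by
      rw [hab]
      have hr : 4 * (Real.cos (Real.pi / m) : ℝ) ^ 2
          = 2 + 2 * Real.cos (2 * Real.pi / m) := by
        have hcs := Real.cos_sq (Real.pi / m)
        have h2x : 2 * (Real.pi / m) = 2 * Real.pi / m := by ring
        rw [h2x] at hcs
        nlinarith [hcs]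
      calc (4 : ℂ) * (Real.cos (Real.pi / m) : ℂ) ^ 2
          = ((4 * Real.cos (Real.pi / m) ^ 2 : ℝ) : ℂ) := by push_cast; ring
        _ = ((2 + 2 * Real.cos (2 * Real.pi / m) : ℝ) : ℂ) := by rw [hr]
        _ = 2 + lam + μ := by
              push_cast [← Complex.ofReal_cos]
              linear_combination - hlcos
    set w₁ : V := b • x + (lam + 1) • y with hw₁def
    set w₂ : V := b • x + (μ + 1) • y with hw₂def
    have hgw₁ : g w₁ = lam • w₁ := by
      rw [hw₁def, map_add, map_smul, map_smul, hgx, hgy]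
      match_scalars
      · ring
      · linear_combination lam * hab' + hμmul
    have hgw₂ : g w₂ = μ • w₂ := by
      rw [hw₂def, map_add, map_smul, map_smul, hgx, hgy]
      match_scalars
      · ring
      · linear_combination μ * hab' + hμmul
    have hpow : ∀ (c : ℂ) (w : V), g w = c • w → ∀ j, (g ^ j) w = c ^ j • w := by
      intro c w hw j
      induction j with
      | zero => simp
      | succ j ih =>
          rw [pow_succ, Module.End.mul_apply, hw, map_smul, ih, smul_smul, pow_succ]
          congr 1
          ring
    have hμm : μ ^ m = 1 := by rw [hμdef, inv_pow, hlm, inv_one]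
    have hμ1 : μ ≠ 1 := fun h => hl1 (inv_eq_one.mp h)
    have hd : lam - μ ≠ 0 := by
      rw [sub_ne_zero]
      intro h
      apply hl2ne
      rw [sq]
      nth_rewrite 2 [h]
      exact hμmul
    have hgmw₁ : (g ^ m) w₁ = w₁ := by rw [hpow lam w₁ hgw₁ m, hlm, one_smul]
    have hgmw₂ : (g ^ m) w₂ = w₂ := by rw [hpow μ w₂ hgw₂ m, hμm, one_smul]
    have sum_lam : ∑ i ∈ Finset.range m, lam ^ i = 0 := by
      rw [geom_sum_eq hl1, hlm]
      simp
    have sum_μ : ∑ i ∈ Finset.range m, μ ^ i = 0 := by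
      rw [geom_sum_eq hμ1, hμm]
      simp
    have hSw₁ : (∑ i ∈ Finset.range m, g ^ i) w₁ = 0 := by
      rw [LinearMap.sum_apply]
      simp_rw [hpow lam w₁ hgw₁]
      rw [← Finset.sum_smul, sum_lam, zero_smul]
    have hSw₂ : (∑ i ∈ Finset.range m, g ^ i) w₂ = 0 := by
      rw [LinearMap.sum_apply]
      simp_rw [hpow μ w₂ hgw₂]
      rw [← Finset.sum_smul, sum_μ, zero_smul]
    have hy : (lam - μ) • y = w₁ - w₂ := by
      rw [hw₁def, hw₂def]
      match_scalars <;> ring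
    have hbx : b • x = w₁ - (lam + 1) • y := by
      rw [hw₁def]
      match_scalars <;> ring
    have hym : (g ^ m) y = y := by
      have h1 : (lam - μ) • (g ^ m) y = (lam - μ) • y := by
        rw [← map_smul, hy, map_sub, hgmw₁, hgmw₂]
      exact smul_right_injective V hd h1
    have hxm : (g ^ m) x = x := by
      have h1 : b • (g ^ m) x = b • x := by
        rw [← map_smul, hbx, map_sub, hgmw₁, map_smul, hym]
      exact smul_right_injective V hb h1
    have hSy : (∑ i ∈ Finset.range m, g ^ i) y = 0 := by
      have h1 : (lam - μ) • (∑ i ∈ Finset.range m, g ^ i) y = 0 := by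
        rw [← map_smul, hy, map_sub, hSw₁, hSw₂, sub_zero]
      exact (smul_eq_zero.mp h1).resolve_left hd
    have hSx : (∑ i ∈ Finset.range m, g ^ i) x = 0 := by
      have h1 : b • (∑ i ∈ Finset.range m, g ^ i) x = 0 := by
        rw [← map_smul, hbx, map_sub, hSw₁, map_smul, hSy, smul_zero, sub_zero]
      exact (smul_eq_zero.mp h1).resolve_left hb
    exact ⟨⟨hxm, hym⟩, hSx, hSy⟩

open Finsupp

section Eval
variable {B : Type*} [DecidableEq B] (M : CoxeterMatrix B) (s₁ t₁ s₂ t₂ : B)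

lemma sec3Act_single (s : B) (p : B × ℤ) :
    sec3Act M s₁ t₁ s₂ t₂ s (single p 1) =
    (if s = p.1 then -single p 1
    else if s = s₁ ∧ p.1 = t₁ then
      single p 1 + (2 * Real.cos (Real.pi / (M s₁ t₁ : ℝ)) : ℂ) • single (s₁, p.2 + 1) 1
    else if s = t₁ ∧ p.1 = s₁ then
      single p 1 + (2 * Real.cos (Real.pi / (M s₁ t₁ : ℝ)) : ℂ) • single (t₁, p.2 - 1) 1
    else if s = s₂ ∧ p.1 = t₂ then
      single p 1 + ((2 : ℂ) ^ (p.2 + 1) * (Real.cos (Real.pi / (M s₂ t₂ : ℝ)) : ℂ)) •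
        single (s₂, p.2 + 1) 1
    else if s = t₂ ∧ p.1 = s₂ then
      single p 1 + ((2 : ℂ) ^ (2 - p.2) * (Real.cos (Real.pi / (M s₂ t₂ : ℝ)) : ℂ)) •
        single (t₂, p.2 - 1) 1
    else
      single p 1 + (2 * Real.cos (Real.pi / (M s p.1 : ℝ)) : ℂ) • single (s, p.2) 1) := by
  simp only [sec3Act, Finsupp.lift_apply]
  rw [Finsupp.sum_single_index (by simp), one_smul]

lemma sec3Act_diag (s : B) (n : ℤ) :
    sec3Act M s₁ t₁ s₂ t₂ s (single (s, n) 1) = -single (s, n) 1 := by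
  rw [sec3Act_single]; simp

lemma sec3Act_shape {s u : B} (h : s ≠ u) (n : ℤ) :
    ∃ (a : ℂ) (k : ℤ), sec3Act M s₁ t₁ s₂ t₂ s (single (u, n) 1)
      = single (u, n) 1 + a • single (s, k) 1 := by
  rw [sec3Act_single]
  split_ifs with h1 h2 h3 h4 h5
  · exact absurd h1 h
  · exact ⟨_, n + 1, by rw [h2.1]⟩
  · exact ⟨_, n - 1, by rw [h3.1]⟩
  · exact ⟨_, n + 1, by rw [h4.1]⟩
  · exact ⟨_, n - 1, by rw [h5.1]⟩
  · exact ⟨_, n, rfl⟩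

lemma endo_ext {f g : ((B × ℤ) →₀ ℂ) →ₗ[ℂ] ((B × ℤ) →₀ ℂ)}
    (h : ∀ p, f (single p 1) = g (single p 1)) : f = g :=
  Finsupp.lhom_ext' fun p => LinearMap.ext_ring (by simpa using h p)

lemma sec3Act_sq (s : B) :
    sec3Act M s₁ t₁ s₂ t₂ s * sec3Act M s₁ t₁ s₂ t₂ s = 1 := by
  refine endo_ext fun p => ?_
  obtain ⟨u, n⟩ := p
  rw [Module.End.mul_apply, Module.End.one_apply]
  by_cases hsu : s = u
  · subst hsu
    rw [sec3Act_diag, map_neg, sec3Act_diag, neg_neg]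
  · obtain ⟨a, k, hak⟩ := sec3Act_shape M s₁ t₁ s₂ t₂ hsu n
    rw [hak, map_add, map_smul, hak, sec3Act_diag, smul_neg]
    abel


lemma cos_pi_div_pos {m : ℕ} (h3 : 3 ≤ m) : 0 < Real.cos (Real.pi / m) := by
  have hπ := Real.pi_pos
  have hm : (3:ℝ) ≤ m := by exact_mod_cast h3
  apply Real.cos_pos_of_mem_Ioo
  constructor
  · have : 0 < Real.pi / m := by positivity
    linarith
  · have h1 : Real.pi / m ≤ Real.pi / 3 :=
      div_le_div_of_nonneg_left (by positivity) (by norm_num) hm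
    linarith

lemma sec3Act_e1 (h1 : s₁ ≠ t₁) (n : ℤ) :
    sec3Act M s₁ t₁ s₂ t₂ s₁ (single (t₁, n) 1) = single (t₁, n) 1
      + (2 * Real.cos (Real.pi / (M s₁ t₁ : ℝ)) : ℂ) • single (s₁, n + 1) 1 := by
  rw [sec3Act_single, if_neg (show ¬(s₁ = (t₁, n).1) from h1),
    if_pos (show s₁ = s₁ ∧ (t₁, n).1 = t₁ from ⟨rfl, rfl⟩)]

lemma sec3Act_e1' (h1 : s₁ ≠ t₁) (n : ℤ) :
    sec3Act M s₁ t₁ s₂ t₂ t₁ (single (s₁, n) 1) = single (s₁, n) 1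
      + (2 * Real.cos (Real.pi / (M s₁ t₁ : ℝ)) : ℂ) • single (t₁, n - 1) 1 := by
  rw [sec3Act_single, if_neg (show ¬(t₁ = (s₁, n).1) from Ne.symm h1),
    if_neg (show ¬(t₁ = s₁ ∧ (s₁, n).1 = t₁) from fun h => h1 h.1.symm),
    if_pos (show t₁ = t₁ ∧ (s₁, n).1 = s₁ from ⟨rfl, rfl⟩)]

lemma sec3Act_e2 (h2 : s₂ ≠ t₂) (hd1 : ¬(s₁ = s₂ ∧ t₁ = t₂)) (hd2 : ¬(s₁ = t₂ ∧ t₁ = s₂))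
    (n : ℤ) :
    sec3Act M s₁ t₁ s₂ t₂ s₂ (single (t₂, n) 1) = single (t₂, n) 1
      + ((2 : ℂ) ^ (n + 1) * (Real.cos (Real.pi / (M s₂ t₂ : ℝ)) : ℂ)) • single (s₂, n + 1) 1 := by
  rw [sec3Act_single, if_neg (show ¬(s₂ = (t₂, n).1) from h2),
    if_neg (show ¬(s₂ = s₁ ∧ (t₂, n).1 = t₁) from fun h => hd1 ⟨h.1.symm, h.2.symm⟩),
    if_neg (show ¬(s₂ = t₁ ∧ (t₂, n).1 = s₁) from fun h => hd2 ⟨h.2.symm, h.1.symm⟩),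
    if_pos (show s₂ = s₂ ∧ (t₂, n).1 = t₂ from ⟨rfl, rfl⟩)]

lemma sec3Act_e2' (h2 : s₂ ≠ t₂) (hd1 : ¬(s₁ = s₂ ∧ t₁ = t₂)) (hd2 : ¬(s₁ = t₂ ∧ t₁ = s₂))
    (n : ℤ) :
    sec3Act M s₁ t₁ s₂ t₂ t₂ (single (s₂, n) 1) = single (s₂, n) 1
      + ((2 : ℂ) ^ (2 - n) * (Real.cos (Real.pi / (M s₂ t₂ : ℝ)) : ℂ)) • single (t₂, n - 1) 1 := by
  rw [sec3Act_single, if_neg (show ¬(t₂ = (s₂, n).1) from Ne.symm h2),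
    if_neg (show ¬(t₂ = s₁ ∧ (s₂, n).1 = t₁) from fun h => hd2 ⟨h.1.symm, h.2.symm⟩),
    if_neg (show ¬(t₂ = t₁ ∧ (s₂, n).1 = s₁) from fun h => hd1 ⟨h.2.symm, h.1.symm⟩),
    if_neg (show ¬(t₂ = s₂ ∧ (s₂, n).1 = t₂) from fun h => h2 h.1.symm),
    if_pos (show t₂ = t₂ ∧ (s₂, n).1 = s₂ from ⟨rfl, rfl⟩)]

lemma sec3Act_gen {s t : B} (hst : s ≠ t)
    (hc1 : ¬(s = s₁ ∧ t = t₁)) (hc2 : ¬(s = t₁ ∧ t = s₁))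
    (hc3 : ¬(s = s₂ ∧ t = t₂)) (hc4 : ¬(s = t₂ ∧ t = s₂)) (n : ℤ) :
    sec3Act M s₁ t₁ s₂ t₂ s (single (t, n) 1) = single (t, n) 1
      + (2 * Real.cos (Real.pi / (M s t : ℝ)) : ℂ) • single (s, n) 1 := by
  rw [sec3Act_single, if_neg (show ¬(s = (t, n).1) from hst),
    if_neg (show ¬(s = s₁ ∧ (t, n).1 = t₁) from hc1),
    if_neg (show ¬(s = t₁ ∧ (t, n).1 = s₁) from hc2),
    if_neg (show ¬(s = s₂ ∧ (t, n).1 = t₂) from hc3),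
    if_neg (show ¬(s = t₂ ∧ (t, n).1 = s₂) from hc4)]

lemma sec3Act_pairing (hfin : ∀ s t, M s t ≠ 0)
    (h1 : s₁ ≠ t₁) (hM1 : M s₁ t₁ ≠ 2) (h2 : s₂ ≠ t₂) (hM2 : M s₂ t₂ ≠ 2)
    (hd1 : ¬(s₁ = s₂ ∧ t₁ = t₂))
    {s t : B} (hst : s ≠ t) :
    ∃ ε : ℤ, ∀ n : ℤ, ∃ a b : ℂ,
      sec3Act M s₁ t₁ s₂ t₂ s (single (t, n) 1) = single (t, n) 1 + a • single (s, n + ε) 1 ∧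
      sec3Act M s₁ t₁ s₂ t₂ t (single (s, n + ε) 1) = single (s, n + ε) 1 + b • single (t, n) 1 ∧
      a * b = 4 * (Real.cos (Real.pi / (M s t : ℝ)) : ℂ) ^ 2 ∧
      (M s t = 2 → a = 0 ∧ b = 0) ∧ (M s t ≠ 2 → b ≠ 0) := by
  have hMoff := M.off_diagonal s t hst
  have hMfin := hfin s t
  have hMsym : M t s = M s t := M.symmetric t s
  have cosne : ∀ m : ℕ, 3 ≤ m → (2 * (Real.cos (Real.pi / m) : ℂ)) ≠ 0 := by
    intro m hm
    have := cos_pi_div_pos hm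
    simp only [ne_eq, mul_eq_zero, Complex.ofReal_eq_zero]
    push_neg
    exact ⟨two_ne_zero, by exact_mod_cast this.ne'⟩
  by_cases hc1 : s = s₁ ∧ t = t₁
  · obtain ⟨hs, ht⟩ := hc1
    have hMeq : M s t = M s₁ t₁ := by rw [hs, ht]
    refine ⟨1, fun n => ⟨(2 * Real.cos (Real.pi / (M s t : ℝ)) : ℂ),
      (2 * Real.cos (Real.pi / (M s t : ℝ)) : ℂ), ?_, ?_, by push_cast; ring,
      fun h => absurd (hMeq ▸ h) hM1, fun _ => cosne _ (by omega)⟩⟩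
    · rw [hMeq, hs, ht]
      exact sec3Act_e1 M s₁ t₁ s₂ t₂ h1 n
    · rw [hMeq, hs, ht]
      have := sec3Act_e1' M s₁ t₁ s₂ t₂ h1 (n + 1)
      rwa [add_sub_cancel_right] at this
  · by_cases hc2 : s = t₁ ∧ t = s₁
    · obtain ⟨hs, ht⟩ := hc2
      have hMeq : M s t = M t₁ s₁ := by rw [hs, ht]
      have hMeq' : M s t = M s₁ t₁ := hMeq.trans (M.symmetric t₁ s₁)
      refine ⟨-1, fun n => ⟨(2 * Real.cos (Real.pi / (M s₁ t₁ : ℝ)) : ℂ),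
        (2 * Real.cos (Real.pi / (M s₁ t₁ : ℝ)) : ℂ), ?_, ?_,
        (by rw [hMeq']; push_cast; ring),
        fun h => absurd (hMeq' ▸ h) hM1, fun _ => cosne _ (by omega)⟩⟩
      · rw [hs, ht]
        have := sec3Act_e1' M s₁ t₁ s₂ t₂ h1 n
        rwa [show n - 1 = n + -1 from by ring] at this
      · rw [hs, ht]
        have := sec3Act_e1 M s₁ t₁ s₂ t₂ h1 (n + -1)
        rwa [show n + -1 + 1 = n from by ring] at this
    · by_cases hc3 : s = s₂ ∧ t = t₂
      · obtain ⟨hs, ht⟩ := hc3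
        have hd2 : ¬(s₁ = t₂ ∧ t₁ = s₂) := fun h => hc2 ⟨hs.trans h.2.symm, ht.trans h.1.symm⟩
        have hMeq : M s t = M s₂ t₂ := by rw [hs, ht]
        refine ⟨1, fun n => ⟨((2:ℂ) ^ (n+1) * (Real.cos (Real.pi / (M s₂ t₂ : ℝ)) : ℂ)),
          ((2:ℂ) ^ (2-(n+1)) * (Real.cos (Real.pi / (M s₂ t₂ : ℝ)) : ℂ)), ?_, ?_, ?_,
          fun h => absurd (hMeq ▸ h) hM2, fun _ => ?_⟩⟩
        · rw [hs, ht]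
          exact sec3Act_e2 M s₁ t₁ s₂ t₂ h2 hd1 hd2 n
        · rw [hs, ht]
          have := sec3Act_e2' M s₁ t₁ s₂ t₂ h2 hd1 hd2 (n + 1)
          rwa [add_sub_cancel_right] at this
        · rw [hMeq,
            show ((2:ℂ) ^ (n+1) * (Real.cos (Real.pi / (M s₂ t₂ : ℝ)) : ℂ))
                * ((2:ℂ) ^ (2-(n+1)) * (Real.cos (Real.pi / (M s₂ t₂ : ℝ)) : ℂ))
              = ((2:ℂ) ^ (n+1) * (2:ℂ) ^ (2-(n+1)))
                * ((Real.cos (Real.pi / (M s₂ t₂ : ℝ)) : ℂ))^2 from by ring,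
            ← zpow_add₀ (two_ne_zero (α := ℂ)),
            show n + 1 + (2 - (n+1)) = (2:ℤ) from by ring]
          norm_num
        · have h3 : 3 ≤ M s₂ t₂ := by
            have := hfin s₂ t₂
            have := M.off_diagonal s₂ t₂ h2
            omega
          have := cos_pi_div_pos h3
          exact mul_ne_zero (zpow_ne_zero _ (two_ne_zero (α := ℂ)))
            (by exact_mod_cast this.ne')
      · by_cases hc4 : s = t₂ ∧ t = s₂
        · obtain ⟨hs, ht⟩ := hc4
          have hd2 : ¬(s₁ = t₂ ∧ t₁ = s₂) := fun h => hc1 ⟨hs.trans h.1.symm, ht.trans h.2.symm⟩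
          have hMeq : M s t = M s₂ t₂ := by rw [hs, ht]; exact M.symmetric t₂ s₂
          refine ⟨-1, fun n => ⟨((2:ℂ) ^ (2-n) * (Real.cos (Real.pi / (M s₂ t₂ : ℝ)) : ℂ)),
            ((2:ℂ) ^ n * (Real.cos (Real.pi / (M s₂ t₂ : ℝ)) : ℂ)), ?_, ?_, ?_,
            fun h => absurd (hMeq ▸ h) hM2, fun _ => ?_⟩⟩
          · rw [hs, ht]
            have := sec3Act_e2' M s₁ t₁ s₂ t₂ h2 hd1 hd2 n
            rwa [show n - 1 = n + -1 from by ring] at this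
          · rw [hs, ht]
            have := sec3Act_e2 M s₁ t₁ s₂ t₂ h2 hd1 hd2 (n + -1)
            rwa [show n + -1 + 1 = n from by ring] at this
          · rw [hMeq,
              show ((2:ℂ) ^ (2-n) * (Real.cos (Real.pi / (M s₂ t₂ : ℝ)) : ℂ))
                  * ((2:ℂ) ^ n * (Real.cos (Real.pi / (M s₂ t₂ : ℝ)) : ℂ))
                = ((2:ℂ) ^ (2-n) * (2:ℂ) ^ n)
                  * ((Real.cos (Real.pi / (M s₂ t₂ : ℝ)) : ℂ))^2 from by ring,
              ← zpow_add₀ (two_ne_zero (α := ℂ)),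
              show 2 - n + n = (2:ℤ) from by ring]
            norm_num
          · have h3 : 3 ≤ M s₂ t₂ := by
              have := hfin s₂ t₂
              have := M.off_diagonal s₂ t₂ h2
              omega
            have := cos_pi_div_pos h3
            exact mul_ne_zero (zpow_ne_zero _ (two_ne_zero (α := ℂ)))
              (by exact_mod_cast this.ne')
        · refine ⟨0, fun n => ⟨(2 * Real.cos (Real.pi / (M s t : ℝ)) : ℂ),
            (2 * Real.cos (Real.pi / (M t s : ℝ)) : ℂ), ?_, ?_,
            (by rw [hMsym]; push_cast; ring), ?_,
            fun hM => by rw [hMsym]; exact cosne _ (by omega)⟩⟩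
          · rw [show n + (0:ℤ) = n from by ring]
            exact sec3Act_gen M s₁ t₁ s₂ t₂ hst hc1 hc2 hc3 hc4 n
          · rw [show n + (0:ℤ) = n from by ring]
            exact sec3Act_gen M s₁ t₁ s₂ t₂ (Ne.symm hst)
              (fun h => hc2 ⟨h.2, h.1⟩) (fun h => hc1 ⟨h.2, h.1⟩)
              (fun h => hc4 ⟨h.2, h.1⟩) (fun h => hc3 ⟨h.2, h.1⟩) n
          · intro hM
            have hcos : Real.cos (Real.pi / (M s t : ℝ)) = 0 := by
              rw [hM]
              norm_num [Real.cos_pi_div_two]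
            constructor
            · simp [hcos]
            · rw [hMsym, hcos]
              simp

lemma sec3Act_pair_pow (hfin : ∀ s t, M s t ≠ 0)
    (h1 : s₁ ≠ t₁) (hM1 : M s₁ t₁ ≠ 2) (h2 : s₂ ≠ t₂) (hM2 : M s₂ t₂ ≠ 2)
    (hd1 : ¬(s₁ = s₂ ∧ t₁ = t₂))
    {s t : B} (hst : s ≠ t) :
    (sec3Act M s₁ t₁ s₂ t₂ s * sec3Act M s₁ t₁ s₂ t₂ t) ^ (M s t) = 1 := by
  set σ := sec3Act M s₁ t₁ s₂ t₂ with hσ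
  set g : Module.End ℂ ((B × ℤ) →₀ ℂ) := σ s * σ t with hg
  set m := M s t with hm
  have hm0 : m ≠ 0 := hfin s t
  have hm1 : m ≠ 1 := M.off_diagonal s t hst
  obtain ⟨ε, hpair⟩ := sec3Act_pairing M s₁ t₁ s₂ t₂ hfin h1 hM1 h2 hM2 hd1 hst
  have hblock : ∀ k : ℤ,
      ((g ^ m) (single (t, k) 1) = single (t, k) 1 ∧
       (g ^ m) (single (s, k + ε) 1) = single (s, k + ε) 1) ∧
      ((∑ i ∈ Finset.range m, g ^ i) (single (t, k) 1) = 0 ∧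
       (∑ i ∈ Finset.range m, g ^ i) (single (s, k + ε) 1) = 0) := by
    intro k
    obtain ⟨a, b, hsx, hty, hab, hz, hnz⟩ := hpair k
    have hgx : g (single (t, k) 1) = -single (t, k) 1 - a • single (s, k + ε) 1 := by
      rw [hg, Module.End.mul_apply, hσ, sec3Act_diag, map_neg, hsx]
      module
    have hgy : g (single (s, k + ε) 1)
        = b • single (t, k) 1 + (a * b - 1) • single (s, k + ε) 1 := by
      rw [hg, Module.End.mul_apply, hσ, hty, map_add, map_smul, sec3Act_diag, hsx]
      match_scalars <;> ring
    exact blockLemma g m hm0 hm1 hab hz hnz hgx hgy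
  set U : Submodule ℂ ((B × ℤ) →₀ ℂ) :=
    Submodule.span ℂ {v | ∃ k : ℤ, v = single (t, k) (1:ℂ) ∨ v = single (s, k) 1} with hUdef
  have hU : ∀ w ∈ U, (g ^ m) w = w ∧ (∑ i ∈ Finset.range m, g ^ i) w = 0 := by
    intro w hw
    refine Submodule.span_induction ?_ ?_ ?_ ?_ hw
    · rintro v ⟨k, rfl | rfl⟩
      · exact ⟨(hblock k).1.1, (hblock k).2.1⟩
      · have h := hblock (k - ε)
        rw [sub_add_cancel] at h
        exact ⟨h.1.2, h.2.2⟩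
    · exact ⟨map_zero _, map_zero _⟩
    · rintro v v' _ _ ⟨hv1, hv2⟩ ⟨hv1', hv2'⟩
      exact ⟨by rw [map_add, hv1, hv1'], by rw [map_add, hv2, hv2', add_zero]⟩
    · rintro c v _ ⟨hv1, hv2⟩
      exact ⟨by rw [map_smul, hv1], by rw [map_smul, hv2, smul_zero]⟩
  refine endo_ext fun p => ?_
  obtain ⟨u, k⟩ := p
  rw [Module.End.one_apply]
  by_cases hu : u = t
  · subst hu
    exact (hU _ (Submodule.subset_span ⟨k, Or.inl rfl⟩)).1
  by_cases hu' : u = s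
  · subst hu'
    exact (hU _ (Submodule.subset_span ⟨k, Or.inr rfl⟩)).1
  · obtain ⟨b', k1, hb'⟩ := sec3Act_shape M s₁ t₁ s₂ t₂ (fun h => hu (h.symm)) k
    obtain ⟨a', k2, ha'⟩ := sec3Act_shape M s₁ t₁ s₂ t₂ (fun h => hu' (h.symm)) k
    obtain ⟨a'', k3, ha''⟩ := sec3Act_shape M s₁ t₁ s₂ t₂ hst k1
    set w : (B × ℤ) →₀ ℂ := a' • single (s, k2) 1 + b' • single (t, k1) 1
      + (b' * a'') • single (s, k3) 1 with hwdef
    have hgu : g (single (u, k) 1) = single (u, k) 1 + w := by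
      rw [hg, Module.End.mul_apply, hσ, hb', map_add, map_smul, ha', ha'', hwdef]
      match_scalars <;> ring
    have hwU : w ∈ U :=
      add_mem (add_mem
        (Submodule.smul_mem _ _ (Submodule.subset_span ⟨k2, Or.inr rfl⟩))
        (Submodule.smul_mem _ _ (Submodule.subset_span ⟨k1, Or.inl rfl⟩)))
        (Submodule.smul_mem _ _ (Submodule.subset_span ⟨k3, Or.inr rfl⟩))
    have hiter : ∀ j : ℕ, (g ^ j) (single (u, k) 1)
        = single (u, k) 1 + ∑ i ∈ Finset.range j, (g ^ i) w := by
      intro j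
      induction j with
      | zero => simp
      | succ j ih =>
          calc (g ^ (j+1)) (single (u, k) 1) = g ((g ^ j) (single (u, k) 1)) := by
                rw [pow_succ', Module.End.mul_apply]
            _ = g (single (u, k) 1) + g (∑ i ∈ Finset.range j, (g ^ i) w) := by
                rw [ih, map_add]
            _ = (single (u, k) 1 + w) + ∑ i ∈ Finset.range j, (g ^ (i+1)) w := by
                rw [hgu, map_sum]
                congr 1
                refine Finset.sum_congr rfl fun i _ => ?_
                rw [← Module.End.mul_apply, ← pow_succ']
            _ = single (u, k) 1 + ∑ i ∈ Finset.range (j+1), (g ^ i) w := by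
                rw [Finset.sum_range_succ']
                simp only [pow_zero, Module.End.one_apply]
                abel
    rw [hiter m, ← LinearMap.sum_apply, (hU w hwU).2, add_zero]

end Eval

/-- under the Section 3 assumptions, the operators `sec3Act M s₁ t₁ s₂ t₂ s`
define a representation of `W` on `V = (B × ℤ) →₀ ℂ`: each is an involution, the product of the
operators of `s` and `t` has order dividing `m_{st}`, and hence `s ↦ (its operator)` extends to
a group homomorphism `W → GL(V)`, i.e. to a representation of `W`. -/
theorem statement2 {B W : Type*} [Group W] [Fintype B] [DecidableEq B]
    (M : CoxeterMatrix B) (cs : CoxeterSystem M W)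
    (hfin : ∀ s t : B, M s t ≠ 0)
    (hconn : (coxeterGraph M).Connected)
    (G₀ : SimpleGraph B) (hsub : G₀ ≤ coxeterGraph M) (htree : G₀.IsTree)
    (s₁ t₁ s₂ t₂ : B)
    (he₁ : (coxeterGraph M).Adj s₁ t₁) (hne₁ : ¬ G₀.Adj s₁ t₁)
    (he₂ : (coxeterGraph M).Adj s₂ t₂) (hne₂ : ¬ G₀.Adj s₂ t₂)
    (hdist : Sym2.mk (s₁, t₁) ≠ Sym2.mk (s₂, t₂)) :
    (∀ s : B, sec3Act M s₁ t₁ s₂ t₂ s * sec3Act M s₁ t₁ s₂ t₂ s = 1) ∧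
    (∀ s t : B, (sec3Act M s₁ t₁ s₂ t₂ s * sec3Act M s₁ t₁ s₂ t₂ t) ^ (M s t) = 1) ∧
    ∃ ρ : Representation ℂ W ((B × ℤ) →₀ ℂ),
      ∀ s : B, ρ (cs.simple s) = sec3Act M s₁ t₁ s₂ t₂ s := by
  obtain ⟨hne1, hM1⟩ := he₁
  obtain ⟨hne2, hM2⟩ := he₂
  have hd1 : ¬(s₁ = s₂ ∧ t₁ = t₂) := fun h => hdist (by obtain ⟨rfl, rfl⟩ := h; rfl)
  have key : CoxeterMatrix.IsLiftable M (sec3Act M s₁ t₁ s₂ t₂) := by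
    intro s t
    by_cases hst : s = t
    · subst hst
      rw [M.diagonal, pow_one]
      exact sec3Act_sq M s₁ t₁ s₂ t₂ s
    · exact sec3Act_pair_pow M s₁ t₁ s₂ t₂ hfin hne1 hM1 hne2 hM2 hd1 hst
  exact ⟨fun s => by have := key s s; rwa [M.diagonal, pow_one] at this, key,
    cs.lift ⟨_, key⟩, fun s => cs.lift_apply_simple key s⟩
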